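/- (Theorem 1, part 1: exponential stability and infinite-horizon cost) Consider a closed-loop trajectory of the AR-RHC under a replay attack signal with at most S consecutive attacks, with horizon N ≥ S + 1, and assume every N′-QP encountered attains its infimum for N − S ≤ N′ ≤ N. If γ_{N,S} < 1, then for all k ≥ 0 (with s(−1) := 0): V_{N−s(k−1)}(x(k)) ≤ γ_{N,S}^k · V_N(x(0)); moreover, the infinite-horizon cost satisfies Σ_{k=0}^{∞} ( x(k)ᵀ P x(k) + u_k ᵀ Q u_k ) ≤ V_N(x(0))/(1 − γ_{N,S}), where u_k := u(k | k − s(k)) is the input applied at time k. -/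

import Mathlib

open Matrix Finset Filter Topology

/-- The smallest eigenvalue of a (symmetric) real matrix. -/
noncomputable def lamMin {n : ℕ} (R : Matrix (Fin n) (Fin n) ℝ) : ℝ :=
  if h : R.IsHermitian then ⨅ i, h.eigenvalues i else 0

/-- The largest eigenvalue of a (symmetric) real matrix. -/
noncomputable def lamMax {n : ℕ} (R : Matrix (Fin n) (Fin n) ℝ) : ℝ :=
  if h : R.IsHermitian then ⨆ i, h.eigenvalues i else 0

/-- The quadratic form `xᵀ R x`. -/
noncomputable def qf {p : ℕ} (R : Matrix (Fin p) (Fin p) ℝ) (x : Fin p → ℝ) : ℝ :=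
  x ⬝ᵥ R.mulVec x

/-- λ := 1 − λ_min(Q̄)/λ_max(P̄). -/
noncomputable def lamParam {n : ℕ} (Qb Pb : Matrix (Fin n) (Fin n) ℝ) : ℝ :=
  1 - lamMin Qb / lamMax Pb

/-- φ_N := (λ_max(P̄)·λ_max(P + KᵀQK)/λ_min(P̄))·(1 − λ^{N+1})/(1 − λ). -/
noncomputable def phi {n m : ℕ} (Qb Pb P : Matrix (Fin n) (Fin n) ℝ)
    (Q : Matrix (Fin m) (Fin m) ℝ) (K : Matrix (Fin m) (Fin n) ℝ) (N : ℕ) : ℝ :=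
  (lamMax Pb * lamMax (P + Kᵀ * Q * K) / lamMin Pb) *
    ((1 - lamParam Qb Pb ^ (N + 1)) / (1 - lamParam Qb Pb))

/-- φ_∞ := λ_max(P̄)·λ_max(P + KᵀQK)/(λ_min(P̄)·(1 − λ)). -/
noncomputable def phiInf {n m : ℕ} (Qb Pb P : Matrix (Fin n) (Fin n) ℝ)
    (Q : Matrix (Fin m) (Fin m) ℝ) (K : Matrix (Fin m) (Fin n) ℝ) : ℝ :=
  lamMax Pb * lamMax (P + Kᵀ * Q * K) / (lamMin Pb * (1 - lamParam Qb Pb))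

/-- ψ := λ_max(KᵀQK + ĀᵀPĀ)/λ_min(P). -/
noncomputable def psiC {n m : ℕ} (P Abar : Matrix (Fin n) (Fin n) ℝ)
    (Q : Matrix (Fin m) (Fin m) ℝ) (K : Matrix (Fin m) (Fin n) ℝ) : ℝ :=
  lamMax (Kᵀ * Q * K + Abarᵀ * P * Abar) / lamMin P

/-- χ := 1 − λ_min(P)/φ_∞. -/
noncomputable def chiC {n m : ℕ} (Qb Pb P : Matrix (Fin n) (Fin n) ℝ)
    (Q : Matrix (Fin m) (Fin m) ℝ) (K : Matrix (Fin m) (Fin n) ℝ) : ℝ :=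
  1 - lamMin P / phiInf Qb Pb P Q K

/-- α_N := (λ_max(KᵀQK + ĀᵀPĀ)/λ_min(P))·∏_{κ=0}^{N−1}(1 − λ_min(P)/φ_{κ+1}). -/
noncomputable def alphaC {n m : ℕ} (Qb Pb P Abar : Matrix (Fin n) (Fin n) ℝ)
    (Q : Matrix (Fin m) (Fin m) ℝ) (K : Matrix (Fin m) (Fin n) ℝ) (N : ℕ) : ℝ :=
  psiC P Abar Q K * ∏ κ ∈ Finset.range N, (1 - lamMin P / phi Qb Pb P Q K (κ + 1))

/-- γ_{N,S} := (1 − λ_min(P)/φ_∞)·max{1 + α_{N−S−1}, (1 + α_{N−1})·∏_{ℓ=N−S}^{N−1}(1 + α_ℓ)}. -/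
noncomputable def gammaNS {n m : ℕ} (Qb Pb P Abar : Matrix (Fin n) (Fin n) ℝ)
    (Q : Matrix (Fin m) (Fin m) ℝ) (K : Matrix (Fin m) (Fin n) ℝ) (N S : ℕ) : ℝ :=
  (1 - lamMin P / phiInf Qb Pb P Q K) *
    max (1 + alphaC Qb Pb P Abar Q K (N - S - 1))
      ((1 + alphaC Qb Pb P Abar Q K (N - 1)) *
        ∏ ℓ ∈ Finset.Ico (N - S) N, (1 + alphaC Qb Pb P Abar Q K ℓ))

/-- The trajectory of `x(τ+1) = A x(τ) + B u(τ)` from `x0` under the control sequence `u`. -/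
def traj {n m : ℕ} (A : Matrix (Fin n) (Fin n) ℝ) (B : Matrix (Fin n) (Fin m) ℝ)
    (x0 : Fin n → ℝ) (u : ℕ → Fin m → ℝ) : ℕ → Fin n → ℝ
  | 0 => x0
  | τ + 1 => A *ᵥ traj A B x0 u τ + B *ᵥ u τ

/-- Feasibility of a control sequence `u(0),…,u(N−1)` for the `N`-QP at `x`. -/
def Feasible {n m : ℕ} (A : Matrix (Fin n) (Fin n) ℝ) (B : Matrix (Fin n) (Fin m) ℝ)
    (X0 : Set (Fin n → ℝ)) (U : Set (Fin m → ℝ)) (N : ℕ) (x : Fin n → ℝ)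
    (u : ℕ → Fin m → ℝ) : Prop :=
  (∀ τ < N, u τ ∈ U) ∧ (∀ τ < N, traj A B x u (τ + 1) ∈ X0)

/-- The cost `Σ_{τ=0}^{N−1}(x(τ)ᵀPx(τ) + u(τ)ᵀQu(τ)) + x(N)ᵀPx(N)` of the `N`-QP. -/
noncomputable def cost {n m : ℕ} (A : Matrix (Fin n) (Fin n) ℝ) (B : Matrix (Fin n) (Fin m) ℝ)
    (P : Matrix (Fin n) (Fin n) ℝ) (Q : Matrix (Fin m) (Fin m) ℝ) (N : ℕ)
    (x : Fin n → ℝ) (u : ℕ → Fin m → ℝ) : ℝ :=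
  (∑ τ ∈ Finset.range N, (qf P (traj A B x u τ) + qf Q (u τ))) + qf P (traj A B x u N)

/-- `V_N(x)`: the optimal value of the `N`-QP at `x`. -/
noncomputable def Vopt {n m : ℕ} (A : Matrix (Fin n) (Fin n) ℝ) (B : Matrix (Fin n) (Fin m) ℝ)
    (P : Matrix (Fin n) (Fin n) ℝ) (Q : Matrix (Fin m) (Fin m) ℝ)
    (X0 : Set (Fin n → ℝ)) (U : Set (Fin m → ℝ)) (N : ℕ) (x : Fin n → ℝ) : ℝ :=
  sInf (cost A B P Q N x '' {u | Feasible A B X0 U N x u})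
section EigAux

variable {p : ℕ}

lemma herm_lamMax (R : Matrix (Fin p) (Fin p) ℝ) (hR : R.IsHermitian) :
    lamMax R = ⨆ i, hR.eigenvalues i := by
  rw [lamMax, dif_pos hR]

lemma herm_lamMin (R : Matrix (Fin p) (Fin p) ℝ) (hR : R.IsHermitian) :
    lamMin R = ⨅ i, hR.eigenvalues i := by
  rw [lamMin, dif_pos hR]

lemma qf_decomp (R : Matrix (Fin p) (Fin p) ℝ) (hR : R.IsHermitian) (x : Fin p → ℝ) :
    qf R x = ∑ i, hR.eigenvalues i *
      ((star (hR.eigenvectorUnitary : Matrix (Fin p) (Fin p) ℝ) *ᵥ x) i)^2 := by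
  set U : Matrix (Fin p) (Fin p) ℝ := (hR.eigenvectorUnitary : Matrix (Fin p) (Fin p) ℝ)
  have hsp : R = U * Matrix.diagonal hR.eigenvalues * star U := by
    have := hR.spectral_theorem
    simpa [U] using this
  have hy : ∀ z, x ⬝ᵥ (U *ᵥ z) = (star U *ᵥ x) ⬝ᵥ z := by
    intro z
    rw [Matrix.dotProduct_mulVec, ← Matrix.vecMul_transpose]
    congr 1
  conv_lhs => rw [qf, hsp]
  rw [← Matrix.mulVec_mulVec, ← Matrix.mulVec_mulVec, hy]
  simp only [dotProduct, Matrix.mulVec_diagonal]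
  exact Finset.sum_congr rfl fun i _ => by ring

lemma normsq_decomp (R : Matrix (Fin p) (Fin p) ℝ) (hR : R.IsHermitian) (x : Fin p → ℝ) :
    x ⬝ᵥ x = ∑ i, ((star (hR.eigenvectorUnitary : Matrix (Fin p) (Fin p) ℝ) *ᵥ x) i)^2 := by
  set U : Matrix (Fin p) (Fin p) ℝ := (hR.eigenvectorUnitary : Matrix (Fin p) (Fin p) ℝ)
  have h1 : U * star U = 1 := (Matrix.mem_unitaryGroup_iff).mp hR.eigenvectorUnitary.2
  have hy : ∀ z, x ⬝ᵥ (U *ᵥ z) = (star U *ᵥ x) ⬝ᵥ z := by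
    intro z
    rw [Matrix.dotProduct_mulVec, ← Matrix.vecMul_transpose]
    congr 1
  have : x ⬝ᵥ x = x ⬝ᵥ ((U * star U) *ᵥ x) := by rw [h1]; simp
  rw [this, ← Matrix.mulVec_mulVec, hy]
  simp only [dotProduct]
  exact Finset.sum_congr rfl fun i _ => by ring

lemma qf_le_lamMax (R : Matrix (Fin p) (Fin p) ℝ) (hR : R.IsHermitian) (x : Fin p → ℝ) :
    qf R x ≤ lamMax R * (x ⬝ᵥ x) := by
  rw [qf_decomp R hR x, normsq_decomp R hR x, herm_lamMax R hR, Finset.mul_sum]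
  apply Finset.sum_le_sum
  intro i _
  have h1 : hR.eigenvalues i ≤ ⨆ j, hR.eigenvalues j :=
    le_ciSup (Set.Finite.bddAbove (Set.finite_range _)) i
  exact mul_le_mul_of_nonneg_right h1 (sq_nonneg _)

lemma lamMin_le_qf (R : Matrix (Fin p) (Fin p) ℝ) (hR : R.IsHermitian) (x : Fin p → ℝ) :
    lamMin R * (x ⬝ᵥ x) ≤ qf R x := by
  rw [qf_decomp R hR x, normsq_decomp R hR x, herm_lamMin R hR, Finset.mul_sum]
  apply Finset.sum_le_sum
  intro i _
  have h1 : (⨅ j, hR.eigenvalues j) ≤ hR.eigenvalues i :=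
    ciInf_le (Set.Finite.bddBelow (Set.finite_range _)) i
  exact mul_le_mul_of_nonneg_right h1 (sq_nonneg _)

end EigAux
section QfAux
variable {p q : ℕ}

lemma psd_qf_nonneg {R : Matrix (Fin p) (Fin p) ℝ} (hR : R.PosSemidef) (x : Fin p → ℝ) :
    0 ≤ qf R x := by
  simpa [qf] using hR.dotProduct_mulVec_nonneg x

lemma qf_add (R R' : Matrix (Fin p) (Fin p) ℝ) (x : Fin p → ℝ) :
    qf (R + R') x = qf R x + qf R' x := by
  simp [qf, Matrix.add_mulVec, dotProduct_add]

lemma qf_sub (R R' : Matrix (Fin p) (Fin p) ℝ) (x : Fin p → ℝ) :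
    qf (R - R') x = qf R x - qf R' x := by
  simp [qf, Matrix.sub_mulVec, dotProduct_sub]

lemma qf_mulVec (R : Matrix (Fin p) (Fin p) ℝ) (M : Matrix (Fin p) (Fin q) ℝ) (x : Fin q → ℝ) :
    qf R (M *ᵥ x) = qf (Mᵀ * R * M) x := by
  rw [qf, qf, ← Matrix.mulVec_mulVec, ← Matrix.mulVec_mulVec,
    Matrix.dotProduct_mulVec x, Matrix.vecMul_transpose]

lemma conjT_eq_transpose (M : Matrix (Fin p) (Fin q) ℝ) : Mᴴ = Mᵀ := by
  ext i j; simp [Matrix.conjTranspose_apply]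

lemma psd_tmul {R : Matrix (Fin p) (Fin p) ℝ} (hR : R.PosSemidef) (M : Matrix (Fin p) (Fin q) ℝ) :
    (Mᵀ * R * M).PosSemidef := by
  have := hR.conjTranspose_mul_mul_same M
  rwa [conjT_eq_transpose] at this

end QfAux
lemma qf_neg {p : ℕ} (R : Matrix (Fin p) (Fin p) ℝ) (x : Fin p → ℝ) :
    qf (-R) x = - qf R x := by
  simp [qf, Matrix.neg_mulVec, dotProduct_neg]
section ScalarAux
variable {p : ℕ}

lemma exists_unit_vec (hp : 0 < p) : ∃ e : Fin p → ℝ, e ⬝ᵥ e = 1 := by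
  refine ⟨Pi.single ⟨0, hp⟩ 1, ?_⟩
  simp [dotProduct, Pi.single_apply]

lemma lamMin_pos {R : Matrix (Fin p) (Fin p) ℝ} (hp : 0 < p) (hR : R.PosDef) :
    0 < lamMin R := by
  haveI : Nonempty (Fin p) := ⟨⟨0, hp⟩⟩
  rw [herm_lamMin R hR.1]
  obtain ⟨i, hi⟩ := Finite.exists_min hR.1.eigenvalues
  have h1 : hR.1.eigenvalues i ≤ ⨅ j, hR.1.eigenvalues j := le_ciInf hi
  exact lt_of_lt_of_le (hR.eigenvalues_pos i) h1

lemma lamMin_le_lamMax_qf {R R' : Matrix (Fin p) (Fin p) ℝ} (hp : 0 < p)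
    (hR : R.IsHermitian) (hR' : R'.IsHermitian) (h : ∀ z, qf R z ≤ qf R' z) :
    lamMin R ≤ lamMax R' := by
  obtain ⟨e, he⟩ := exists_unit_vec hp
  have h1 := lamMin_le_qf R hR e
  have h2 := qf_le_lamMax R' hR' e
  rw [he, mul_one] at h1 h2
  exact h1.trans ((h e).trans h2)

lemma lamMax_nonneg_psd {R : Matrix (Fin p) (Fin p) ℝ} (hp : 0 < p) (hR : R.PosSemidef) :
    0 ≤ lamMax R := by
  obtain ⟨e, he⟩ := exists_unit_vec hp
  have h2 := qf_le_lamMax R hR.1 e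
  rw [he, mul_one] at h2
  exact (psd_qf_nonneg hR e).trans h2

end ScalarAux

section TrajAux
variable {n m : ℕ} (A : Matrix (Fin n) (Fin n) ℝ) (B : Matrix (Fin n) (Fin m) ℝ)

lemma traj_congr (x : Fin n → ℝ) (u u' : ℕ → Fin m → ℝ) (τ : ℕ)
    (h : ∀ σ < τ, u σ = u' σ) : traj A B x u τ = traj A B x u' τ := by
  induction τ with
  | zero => rfl
  | succ τ ih =>
      simp only [traj]
      rw [ih (fun σ hσ => h σ (hσ.trans (Nat.lt_succ_self τ))), h τ (Nat.lt_succ_self τ)]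

lemma traj_add (x : Fin n → ℝ) (u : ℕ → Fin m → ℝ) (i τ : ℕ) :
    traj A B (traj A B x u i) (fun σ => u (i + σ)) τ = traj A B x u (i + τ) := by
  induction τ with
  | zero => rfl
  | succ τ ih =>
      show A *ᵥ traj A B (traj A B x u i) (fun σ => u (i + σ)) τ + B *ᵥ u (i + τ)
        = traj A B x u (i + τ + 1)
      rw [ih]; rfl

variable (P : Matrix (Fin n) (Fin n) ℝ) (Q : Matrix (Fin m) (Fin m) ℝ)

lemma cost_nonneg (hP : P.PosDef) (hQ : Q.PosDef) (N' : ℕ) (x : Fin n → ℝ)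
    (u : ℕ → Fin m → ℝ) : 0 ≤ cost A B P Q N' x u := by
  have h1 : ∀ τ, 0 ≤ qf P (traj A B x u τ) + qf Q (u τ) := fun τ =>
    add_nonneg (psd_qf_nonneg hP.posSemidef _) (psd_qf_nonneg hQ.posSemidef _)
  exact add_nonneg (Finset.sum_nonneg fun τ _ => h1 τ) (psd_qf_nonneg hP.posSemidef _)

lemma cost_split (N' i : ℕ) (hi : i ≤ N') (x : Fin n → ℝ) (u : ℕ → Fin m → ℝ) :
    cost A B P Q N' x u = (∑ τ ∈ Finset.range i, (qf P (traj A B x u τ) + qf Q (u τ)))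
      + cost A B P Q (N' - i) (traj A B x u i) (fun σ => u (i + σ)) := by
  unfold cost
  rw [show N' = i + (N' - i) by omega, Finset.sum_range_add]
  simp only [traj_add]
  rw [show i + (N' - i) - i = N' - i by omega]
  ring

lemma feasible_shift (X0 : Set (Fin n → ℝ)) (U : Set (Fin m → ℝ)) (N' i : ℕ) (hi : i ≤ N')
    (x : Fin n → ℝ) (u : ℕ → Fin m → ℝ) (hu : Feasible A B X0 U N' x u) :
    Feasible A B X0 U (N' - i) (traj A B x u i) (fun σ => u (i + σ)) := by
  constructor
  · intro τ hτ; exact hu.1 (i + τ) (by omega)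
  · intro τ hτ
    have := traj_add A B x u i (τ + 1)
    rw [show i + (τ + 1) = (i + τ) + 1 by omega] at this
    rw [this]
    exact hu.2 (i + τ) (by omega)

lemma vopt_nonneg (hP : P.PosDef) (hQ : Q.PosDef) (X0 : Set (Fin n → ℝ))
    (U : Set (Fin m → ℝ)) (N' : ℕ) (x : Fin n → ℝ) :
    0 ≤ Vopt A B P Q X0 U N' x := by
  apply Real.sInf_nonneg
  rintro y ⟨u, -, rfl⟩
  exact cost_nonneg A B P Q hP hQ N' x u

lemma vopt_le (hP : P.PosDef) (hQ : Q.PosDef) (X0 : Set (Fin n → ℝ)) (U : Set (Fin m → ℝ))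
    (N' : ℕ) (x : Fin n → ℝ) (u : ℕ → Fin m → ℝ) (hu : Feasible A B X0 U N' x u) :
    Vopt A B P Q X0 U N' x ≤ cost A B P Q N' x u := by
  apply csInf_le
  · exact ⟨0, by rintro y ⟨w, -, rfl⟩; exact cost_nonneg A B P Q hP hQ N' x w⟩
  · exact ⟨u, hu, rfl⟩

end TrajAux
section Machinery
variable {n m : ℕ} (A : Matrix (Fin n) (Fin n) ℝ) (B : Matrix (Fin n) (Fin m) ℝ)
  (K : Matrix (Fin m) (Fin n) ℝ) (Qb Pb P : Matrix (Fin n) (Fin n) ℝ)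
  (Q : Matrix (Fin m) (Fin m) ℝ)

lemma lyap_eq (hLyap : (A + B * K)ᵀ * Pb * (A + B * K) - Pb = -Qb) (v : Fin n → ℝ) :
    qf Pb ((A + B * K) *ᵥ v) = qf Pb v - qf Qb v := by
  rw [qf_mulVec, sub_eq_iff_eq_add.mp hLyap, qf_add, qf_neg]
  ring

lemma qf_le_qf_Pb (hPb : Pb.PosDef)
    (hLyap : (A + B * K)ᵀ * Pb * (A + B * K) - Pb = -Qb) (v : Fin n → ℝ) :
    qf Qb v ≤ qf Pb v := by
  have h := lyap_eq A B K Qb Pb hLyap v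
  have h2 : 0 ≤ qf Pb ((A + B * K) *ᵥ v) := by
    rw [qf_mulVec]
    exact psd_qf_nonneg (psd_tmul hPb.posSemidef _) v
  linarith

lemma lamMax_Pb_pos (hn : 0 < n) (hPb : Pb.PosDef) : 0 < lamMax Pb :=
  lt_of_lt_of_le (lamMin_pos hn hPb)
    (lamMin_le_lamMax_qf hn hPb.1 hPb.1 (fun z => le_refl _))

lemma lam_nonneg (hn : 0 < n) (hQb : Qb.PosDef) (hPb : Pb.PosDef)
    (hLyap : (A + B * K)ᵀ * Pb * (A + B * K) - Pb = -Qb) :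
    0 ≤ lamParam Qb Pb := by
  have h1 : lamMin Qb ≤ lamMax Pb :=
    lamMin_le_lamMax_qf hn hQb.1 hPb.1 (qf_le_qf_Pb A B K Qb Pb hPb hLyap)
  have h2 : 0 < lamMax Pb := lamMax_Pb_pos Pb hn hPb
  have : lamMin Qb / lamMax Pb ≤ 1 := (div_le_one h2).mpr h1
  simp only [lamParam]; linarith

lemma lam_lt_one (hn : 0 < n) (hQb : Qb.PosDef) (hPb : Pb.PosDef) :
    lamParam Qb Pb < 1 := by
  have h1 : 0 < lamMin Qb := lamMin_pos hn hQb
  have h2 : 0 < lamMax Pb := lamMax_Pb_pos Pb hn hPb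
  have : 0 < lamMin Qb / lamMax Pb := div_pos h1 h2
  simp only [lamParam]; linarith

lemma W_dec (hn : 0 < n) (hQb : Qb.PosDef) (hPb : Pb.PosDef)
    (hLyap : (A + B * K)ᵀ * Pb * (A + B * K) - Pb = -Qb) (v : Fin n → ℝ) :
    qf Pb ((A + B * K) *ᵥ v) ≤ lamParam Qb Pb * qf Pb v := by
  rw [lyap_eq A B K Qb Pb hLyap v]
  have h1 : qf Pb v ≤ lamMax Pb * (v ⬝ᵥ v) := qf_le_lamMax Pb hPb.1 v
  have h2 : lamMin Qb * (v ⬝ᵥ v) ≤ qf Qb v := lamMin_le_qf Qb hQb.1 v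
  have h3 : 0 < lamMax Pb := lamMax_Pb_pos Pb hn hPb
  have h4 : 0 < lamMin Qb := lamMin_pos hn hQb
  have h5 : qf Pb v / lamMax Pb ≤ v ⬝ᵥ v := by
    rw [div_le_iff₀ h3]; linarith
  have h6 : lamMin Qb / lamMax Pb * qf Pb v ≤ qf Qb v := by
    calc lamMin Qb / lamMax Pb * qf Pb v = lamMin Qb * (qf Pb v / lamMax Pb) := by ring
    _ ≤ lamMin Qb * (v ⬝ᵥ v) := by
        exact mul_le_mul_of_nonneg_left h5 h4.le
    _ ≤ qf Qb v := h2
  simp only [lamParam]; nlinarith [h6]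

lemma traj_fb (x : Fin n → ℝ) (τ : ℕ) :
    traj A B x (fun σ => K *ᵥ ((A + B * K) ^ σ *ᵥ x)) τ = (A + B * K) ^ τ *ᵥ x := by
  induction τ with
  | zero => simp [traj]
  | succ τ ih =>
      show A *ᵥ traj A B x _ τ + B *ᵥ (K *ᵥ ((A + B * K) ^ τ *ᵥ x)) = _
      rw [ih, pow_succ', ← Matrix.mulVec_mulVec, Matrix.add_mulVec, ← Matrix.mulVec_mulVec]

lemma W_decay (hn : 0 < n) (hQb : Qb.PosDef) (hPb : Pb.PosDef)
    (hLyap : (A + B * K)ᵀ * Pb * (A + B * K) - Pb = -Qb) (x : Fin n → ℝ) (τ : ℕ) :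
    qf Pb ((A + B * K) ^ τ *ᵥ x) ≤ lamParam Qb Pb ^ τ * qf Pb x := by
  induction τ with
  | zero => simp
  | succ τ ih =>
      have h1 : (A + B * K) ^ (τ + 1) *ᵥ x = (A + B * K) *ᵥ ((A + B * K) ^ τ *ᵥ x) := by
        rw [Matrix.mulVec_mulVec, ← pow_succ']
      rw [h1]
      calc qf Pb ((A + B * K) *ᵥ ((A + B * K) ^ τ *ᵥ x))
          ≤ lamParam Qb Pb * qf Pb ((A + B * K) ^ τ *ᵥ x) :=
            W_dec A B K Qb Pb hn hQb hPb hLyap _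
        _ ≤ lamParam Qb Pb * (lamParam Qb Pb ^ τ * qf Pb x) :=
            mul_le_mul_of_nonneg_left ih (lam_nonneg A B K Qb Pb hn hQb hPb hLyap)
        _ = lamParam Qb Pb ^ (τ + 1) * qf Pb x := by ring
end Machinery
section Machinery2
variable {n m : ℕ} (A : Matrix (Fin n) (Fin n) ℝ) (B : Matrix (Fin n) (Fin m) ℝ)
  (K : Matrix (Fin m) (Fin n) ℝ) (Qb Pb P : Matrix (Fin n) (Fin n) ℝ)
  (Q : Matrix (Fin m) (Fin m) ℝ) (c : ℝ) (X0 : Set (Fin n → ℝ))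
  (X : Set (Fin n → ℝ)) (U : Set (Fin m → ℝ))

lemma dot_self_nonneg (v : Fin n → ℝ) : 0 ≤ v ⬝ᵥ v :=
  Finset.sum_nonneg fun i _ => mul_self_nonneg _

lemma herm_PKQK (hP : P.PosDef) (hQ : Q.PosDef) : (P + Kᵀ * Q * K).IsHermitian :=
  hP.1.add (psd_tmul hQ.posSemidef K).1

lemma Cm_pos (hn : 0 < n) (hP : P.PosDef) (hQ : Q.PosDef) :
    0 < lamMax (P + Kᵀ * Q * K) := by
  refine lt_of_lt_of_le (lamMin_pos hn hP) (lamMin_le_lamMax_qf hn hP.1 (herm_PKQK K P Q hP hQ) ?_)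
  intro z
  rw [qf_add]
  have := psd_qf_nonneg (psd_tmul hQ.posSemidef K) z
  linarith

lemma geom_eq (lam : ℝ) (hlam : lam ≠ 1) (M : ℕ) :
    ∑ τ ∈ Finset.range M, lam ^ τ = (1 - lam ^ M) / (1 - lam) := by
  rw [geom_sum_eq hlam]
  rw [← neg_div_neg_eq]
  ring_nf

lemma fallback_exists (hn : 0 < n) (hQb : Qb.PosDef) (hPb : Pb.PosDef)
    (hLyap : (A + B * K)ᵀ * Pb * (A + B * K) - Pb = -Qb)
    (hX0 : X0 = {x : Fin n → ℝ | qf Pb x ≤ c}) (hX0X : X0 ⊆ X)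
    (hKU : ∀ x ∈ X, K *ᵥ x ∈ U) (hP : P.PosDef) (hQ : Q.PosDef)
    (x : Fin n → ℝ) (hx : x ∈ X0) (N' : ℕ) :
    ∃ w, Feasible A B X0 U N' x w ∧
      cost A B P Q N' x w ≤ phi Qb Pb P Q K N' * (x ⬝ᵥ x) := by
  have hlam0 : 0 ≤ lamParam Qb Pb := lam_nonneg A B K Qb Pb hn hQb hPb hLyap
  have hlam1 : lamParam Qb Pb < 1 := lam_lt_one Qb Pb hn hQb hPb
  have hxc : qf Pb x ≤ c := by rw [hX0] at hx; exact hx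
  have hq0 : 0 ≤ qf Pb x := psd_qf_nonneg hPb.posSemidef x
  have hmem : ∀ τ, (A + B * K) ^ τ *ᵥ x ∈ X0 := by
    intro τ
    rw [hX0]
    show qf Pb _ ≤ c
    have h := W_decay A B K Qb Pb hn hQb hPb hLyap x τ
    have h2 : lamParam Qb Pb ^ τ ≤ 1 := pow_le_one₀ hlam0 hlam1.le
    nlinarith
  refine ⟨fun σ => K *ᵥ ((A + B * K) ^ σ *ᵥ x), ⟨?_, ?_⟩, ?_⟩
  · intro τ _; exact hKU _ (hX0X (hmem τ))
  · intro τ _; rw [traj_fb]; exact hmem (τ + 1)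
  · set Cm := lamMax (P + Kᵀ * Q * K) with hCmdef
    have hCm : 0 < Cm := Cm_pos K P Q hn hP hQ
    have hpbm : 0 < lamMin Pb := lamMin_pos hn hPb
    have hpbM : 0 < lamMax Pb := lamMax_Pb_pos Pb hn hPb
    have hx2 : 0 ≤ x ⬝ᵥ x := dot_self_nonneg x
    have stage_bound : ∀ τ : ℕ, qf (P + Kᵀ * Q * K) ((A + B * K) ^ τ *ᵥ x)
        ≤ lamMax Pb * Cm / lamMin Pb * (lamParam Qb Pb ^ τ * (x ⬝ᵥ x)) := by
      intro τ
      set v := (A + B * K) ^ τ *ᵥ x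
      have e1 : qf (P + Kᵀ * Q * K) v ≤ Cm * (v ⬝ᵥ v) :=
        qf_le_lamMax _ (herm_PKQK K P Q hP hQ) v
      have e2 : lamMin Pb * (v ⬝ᵥ v) ≤ qf Pb v := lamMin_le_qf _ hPb.1 v
      have e3 : qf Pb x ≤ lamMax Pb * (x ⬝ᵥ x) := qf_le_lamMax _ hPb.1 x
      have e4 : qf Pb v ≤ lamParam Qb Pb ^ τ * qf Pb x :=
        W_decay A B K Qb Pb hn hQb hPb hLyap x τ
      have hv2 : 0 ≤ v ⬝ᵥ v := dot_self_nonneg v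
      have hs0 : 0 ≤ lamParam Qb Pb ^ τ := pow_nonneg hlam0 τ
      rw [div_mul_eq_mul_div, le_div_iff₀ hpbm]
      nlinarith [mul_le_mul_of_nonneg_left e2 hCm.le,
        mul_le_mul_of_nonneg_left e4 hCm.le,
        mul_le_mul_of_nonneg_left e3 (mul_nonneg hCm.le hs0)]
    have hterm : ∀ τ : ℕ, qf P ((A + B * K) ^ τ *ᵥ x)
        ≤ qf (P + Kᵀ * Q * K) ((A + B * K) ^ τ *ᵥ x) := by
      intro τ
      rw [qf_add]
      have := psd_qf_nonneg (psd_tmul hQ.posSemidef K) ((A + B * K) ^ τ *ᵥ x)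
      linarith
    have hstage_eq : ∀ τ : ℕ, qf P ((A + B * K) ^ τ *ᵥ x)
        + qf Q (K *ᵥ ((A + B * K) ^ τ *ᵥ x))
        = qf (P + Kᵀ * Q * K) ((A + B * K) ^ τ *ᵥ x) := by
      intro τ
      rw [qf_add, qf_mulVec Q K]
    have hphi : phi Qb Pb P Q K N' * (x ⬝ᵥ x)
        = ∑ τ ∈ Finset.range (N' + 1),
            lamMax Pb * Cm / lamMin Pb * (lamParam Qb Pb ^ τ * (x ⬝ᵥ x)) := by
      have : ∑ τ ∈ Finset.range (N' + 1), lamParam Qb Pb ^ τ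
          = (1 - lamParam Qb Pb ^ (N' + 1)) / (1 - lamParam Qb Pb) :=
        geom_eq _ (by linarith) _
      rw [phi, ← this, ← hCmdef, Finset.mul_sum, Finset.sum_mul]
      exact Finset.sum_congr rfl fun τ _ => by ring
    rw [hphi, cost, Finset.sum_range_succ]
    simp only [traj_fb]
    have hsum : ∑ τ ∈ Finset.range N',
        (qf P ((A + B * K) ^ τ *ᵥ x) + qf Q (K *ᵥ ((A + B * K) ^ τ *ᵥ x)))
        ≤ ∑ τ ∈ Finset.range N',
            lamMax Pb * Cm / lamMin Pb * (lamParam Qb Pb ^ τ * (x ⬝ᵥ x)) := by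
      apply Finset.sum_le_sum
      intro τ _
      rw [hstage_eq τ]
      exact stage_bound τ
    have hlast : qf P ((A + B * K) ^ N' *ᵥ x)
        ≤ lamMax Pb * Cm / lamMin Pb * (lamParam Qb Pb ^ N' * (x ⬝ᵥ x)) :=
      (hterm N').trans (stage_bound N')
    linarith

lemma splice_bound (hP : P.PosDef) (hQ : Q.PosDef) (N' i : ℕ) (hi : i ≤ N') (x : Fin n → ℝ)
    (u w : ℕ → Fin m → ℝ) (hu : Feasible A B X0 U N' x u)
    (hopt : cost A B P Q N' x u = Vopt A B P Q X0 U N' x)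
    (hw : Feasible A B X0 U (N' - i) (traj A B x u i) w) :
    cost A B P Q (N' - i) (traj A B x u i) (fun σ => u (i + σ))
      ≤ cost A B P Q (N' - i) (traj A B x u i) w := by
  classical
  set z : ℕ → Fin m → ℝ := fun τ => if τ < i then u τ else w (τ - i) with hz
  have hz1 : ∀ τ, τ ≤ i → traj A B x z τ = traj A B x u τ := fun τ hτ =>
    traj_congr A B x z u τ (fun σ hσ => by simp [hz, show σ < i by omega])
  have hz2 : ∀ σ, traj A B x z (i + σ) = traj A B (traj A B x u i) w σ := by
    intro σ
    induction σ with
    | zero => simpa [traj] using hz1 i le_rfl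
    | succ σ ih =>
        show A *ᵥ traj A B x z (i + σ) + B *ᵥ z (i + σ) = _
        rw [ih, show z (i + σ) = w σ by simp [hz]]
        rfl
  have hzfeas : Feasible A B X0 U N' x z := by
    constructor
    · intro τ hτ
      by_cases h : τ < i
      · simpa [hz, h] using hu.1 τ (by omega)
      · rw [show z τ = w (τ - i) by simp [hz, h]]
        exact hw.1 (τ - i) (by omega)
    · intro τ hτ
      by_cases h : τ + 1 ≤ i
      · rw [hz1 (τ + 1) h]; exact hu.2 τ (by omega)
      · have h2 : τ + 1 = i + (τ + 1 - i) := by omega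
        have h3 : τ + 1 - i = (τ - i) + 1 := by omega
        rw [h2, hz2, h3]
        exact hw.2 (τ - i) (by omega)
  have hcz : cost A B P Q N' x z
      = (∑ τ ∈ Finset.range i, (qf P (traj A B x u τ) + qf Q (u τ)))
        + cost A B P Q (N' - i) (traj A B x u i) w := by
    rw [cost_split A B P Q N' i hi x z]
    congr 1
    · apply Finset.sum_congr rfl
      intro τ hτ
      have hτi : τ < i := Finset.mem_range.mp hτ
      rw [hz1 τ hτi.le, show z τ = u τ by simp [hz, hτi]]
    · rw [hz1 i le_rfl]
      congr 1
      funext σ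
      simp [hz]
  have hcu : cost A B P Q N' x u
      = (∑ τ ∈ Finset.range i, (qf P (traj A B x u τ) + qf Q (u τ)))
        + cost A B P Q (N' - i) (traj A B x u i) (fun σ => u (i + σ)) :=
    cost_split A B P Q N' i hi x u
  have h1 : Vopt A B P Q X0 U N' x ≤ cost A B P Q N' x z :=
    vopt_le A B P Q hP hQ X0 U N' x z hzfeas
  rw [← hopt, hcu, hcz] at h1
  linarith

lemma ext_bound (hn : 0 < n) (hQb : Qb.PosDef) (hPb : Pb.PosDef)
    (hLyap : (A + B * K)ᵀ * Pb * (A + B * K) - Pb = -Qb)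
    (hX0 : X0 = {x : Fin n → ℝ | qf Pb x ≤ c}) (hX0X : X0 ⊆ X)
    (hKU : ∀ x ∈ X, K *ᵥ x ∈ U) (hP : P.PosDef) (hQ : Q.PosDef)
    (N' : ℕ) (x : Fin n → ℝ) (u : ℕ → Fin m → ℝ) (hx : x ∈ X0)
    (hu : Feasible A B X0 U N' x u) :
    Vopt A B P Q X0 U (N' + 1) x ≤ cost A B P Q N' x u
      + qf (Kᵀ * Q * K + (A + B * K)ᵀ * P * (A + B * K)) (traj A B x u N') := by
  classical
  set T := traj A B x u N' with hT
  have hTX0 : T ∈ X0 := by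
    cases N' with
    | zero => exact hx
    | succ M => exact hu.2 M (Nat.lt_succ_self M)
  set z : ℕ → Fin m → ℝ := fun τ => if τ = N' then K *ᵥ T else u τ with hzd
  have hz1 : ∀ τ, τ ≤ N' → traj A B x z τ = traj A B x u τ := fun τ hτ =>
    traj_congr A B x z u τ (fun σ hσ => by simp [hzd, show σ ≠ N' by omega])
  have hzN1 : traj A B x z (N' + 1) = (A + B * K) *ᵥ T := by
    show A *ᵥ traj A B x z N' + B *ᵥ z N' = _
    rw [hz1 N' le_rfl, show z N' = K *ᵥ T by simp [hzd], ← hT,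
      Matrix.add_mulVec, ← Matrix.mulVec_mulVec]
  have hAT : (A + B * K) *ᵥ T ∈ X0 := by
    rw [hX0]
    show qf Pb _ ≤ c
    have h1 := W_dec A B K Qb Pb hn hQb hPb hLyap T
    have h2 : qf Pb T ≤ c := by rw [hX0] at hTX0; exact hTX0
    have h3 : 0 ≤ qf Pb T := psd_qf_nonneg hPb.posSemidef T
    have hlam0 : 0 ≤ lamParam Qb Pb := lam_nonneg A B K Qb Pb hn hQb hPb hLyap
    have hlam1 : lamParam Qb Pb < 1 := lam_lt_one Qb Pb hn hQb hPb
    nlinarith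
  have hzfeas : Feasible A B X0 U (N' + 1) x z := by
    constructor
    · intro τ hτ
      by_cases h : τ = N'
      · rw [show z τ = K *ᵥ T by simp [hzd, h]]
        exact hKU _ (hX0X hTX0)
      · rw [show z τ = u τ by simp [hzd, h]]
        exact hu.1 τ (by omega)
    · intro τ hτ
      by_cases h : τ + 1 ≤ N'
      · rw [hz1 (τ + 1) h]; exact hu.2 τ (by omega)
      · rw [show τ = N' by omega, hzN1]
        exact hAT
  have hcost : cost A B P Q (N' + 1) x z = cost A B P Q N' x u
      + (qf (Kᵀ * Q * K) T + qf P ((A + B * K) *ᵥ T)) := by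
    unfold cost
    rw [Finset.sum_range_succ, hzN1, hz1 N' le_rfl, ← hT,
      show z N' = K *ᵥ T by simp [hzd]]
    have hsum : ∑ τ ∈ Finset.range N', (qf P (traj A B x z τ) + qf Q (z τ))
        = ∑ τ ∈ Finset.range N', (qf P (traj A B x u τ) + qf Q (u τ)) := by
      apply Finset.sum_congr rfl
      intro τ hτ
      have hτN : τ < N' := Finset.mem_range.mp hτ
      rw [hz1 τ hτN.le, show z τ = u τ by simp [hzd, hτN.ne]]
    rw [hsum, qf_mulVec Q K]
    ring
  have h1 : Vopt A B P Q X0 U (N' + 1) x ≤ cost A B P Q (N' + 1) x z :=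
    vopt_le A B P Q hP hQ X0 U (N' + 1) x z hzfeas
  rw [hcost] at h1
  rw [qf_add, ← qf_mulVec P (A + B * K) T]
  linarith

end Machinery2
section Scalars
variable {n m : ℕ} (A : Matrix (Fin n) (Fin n) ℝ) (B : Matrix (Fin n) (Fin m) ℝ)
  (K : Matrix (Fin m) (Fin n) ℝ) (Qb Pb P : Matrix (Fin n) (Fin n) ℝ)
  (Q : Matrix (Fin m) (Fin m) ℝ)

lemma pbm_le_pbM (hn : 0 < n) (hPb : Pb.PosDef) : lamMin Pb ≤ lamMax Pb :=
  lamMin_le_lamMax_qf hn hPb.1 hPb.1 (fun _ => le_refl _)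

lemma pm_le_Cm (hn : 0 < n) (hP : P.PosDef) (hQ : Q.PosDef) :
    lamMin P ≤ lamMax (P + Kᵀ * Q * K) := by
  refine lamMin_le_lamMax_qf hn hP.1 (herm_PKQK K P Q hP hQ) ?_
  intro z
  rw [qf_add]
  have := psd_qf_nonneg (psd_tmul hQ.posSemidef K) z
  linarith

lemma geo_ge_one (hn : 0 < n) (hQb : Qb.PosDef) (hPb : Pb.PosDef)
    (hLyap : (A + B * K)ᵀ * Pb * (A + B * K) - Pb = -Qb) (M : ℕ) :
    1 ≤ (1 - lamParam Qb Pb ^ (M + 1)) / (1 - lamParam Qb Pb) := by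
  have hlam0 : 0 ≤ lamParam Qb Pb := lam_nonneg A B K Qb Pb hn hQb hPb hLyap
  have hlam1 : lamParam Qb Pb < 1 := lam_lt_one Qb Pb hn hQb hPb
  rw [← geom_eq _ (by linarith) (M + 1), Finset.sum_range_succ']
  have : ∀ τ ∈ Finset.range M, (0:ℝ) ≤ lamParam Qb Pb ^ (τ + 1) :=
    fun τ _ => pow_nonneg hlam0 _
  have := Finset.sum_nonneg this
  simp only [pow_zero]
  linarith

lemma pm_le_phi (hn : 0 < n) (hQb : Qb.PosDef) (hPb : Pb.PosDef)
    (hLyap : (A + B * K)ᵀ * Pb * (A + B * K) - Pb = -Qb) (hP : P.PosDef) (hQ : Q.PosDef)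
    (M : ℕ) : lamMin P ≤ phi Qb Pb P Q K M := by
  have h1 : 0 < lamMin P := lamMin_pos hn hP
  have h2 : 0 < lamMin Pb := lamMin_pos hn hPb
  have h3 : lamMin Pb ≤ lamMax Pb := pbm_le_pbM Pb hn hPb
  have h4 : lamMin P ≤ lamMax (P + Kᵀ * Q * K) := pm_le_Cm K P Q hn hP hQ
  have h5 : 1 ≤ (1 - lamParam Qb Pb ^ (M + 1)) / (1 - lamParam Qb Pb) :=
    geo_ge_one A B K Qb Pb hn hQb hPb hLyap M
  have hD : lamMin P ≤ lamMax Pb * lamMax (P + Kᵀ * Q * K) / lamMin Pb := by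
    rw [le_div_iff₀ h2]
    nlinarith
  calc lamMin P = lamMin P * 1 := (mul_one _).symm
    _ ≤ (lamMax Pb * lamMax (P + Kᵀ * Q * K) / lamMin Pb)
        * ((1 - lamParam Qb Pb ^ (M + 1)) / (1 - lamParam Qb Pb)) := by
        apply mul_le_mul hD h5 zero_le_one (le_trans h1.le hD)
    _ = phi Qb Pb P Q K M := rfl

lemma phi_pos (hn : 0 < n) (hQb : Qb.PosDef) (hPb : Pb.PosDef)
    (hLyap : (A + B * K)ᵀ * Pb * (A + B * K) - Pb = -Qb) (hP : P.PosDef) (hQ : Q.PosDef)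
    (M : ℕ) : 0 < phi Qb Pb P Q K M :=
  lt_of_lt_of_le (lamMin_pos hn hP) (pm_le_phi A B K Qb Pb P Q hn hQb hPb hLyap hP hQ M)

lemma phi_le_phiInf (hn : 0 < n) (hQb : Qb.PosDef) (hPb : Pb.PosDef)
    (hLyap : (A + B * K)ᵀ * Pb * (A + B * K) - Pb = -Qb) (hP : P.PosDef) (hQ : Q.PosDef)
    (M : ℕ) : phi Qb Pb P Q K M ≤ phiInf Qb Pb P Q K := by
  have hlam0 : 0 ≤ lamParam Qb Pb := lam_nonneg A B K Qb Pb hn hQb hPb hLyap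
  have hlam1 : lamParam Qb Pb < 1 := lam_lt_one Qb Pb hn hQb hPb
  have h2 : 0 < lamMin Pb := lamMin_pos hn hPb
  have h3 : 0 < lamMax Pb := lamMax_Pb_pos Pb hn hPb
  have h4 : 0 < lamMax (P + Kᵀ * Q * K) := Cm_pos K P Q hn hP hQ
  have hD : 0 < lamMax Pb * lamMax (P + Kᵀ * Q * K) / lamMin Pb := by positivity
  have heq : phiInf Qb Pb P Q K
      = lamMax Pb * lamMax (P + Kᵀ * Q * K) / lamMin Pb * (1 / (1 - lamParam Qb Pb)) := by
    rw [phiInf]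
    field_simp
  rw [heq, phi]
  refine mul_le_mul_of_nonneg_left ?_ hD.le
  have hden : 0 < 1 - lamParam Qb Pb := by linarith
  have hnum : 1 - lamParam Qb Pb ^ (M + 1) ≤ 1 := by
    have := pow_nonneg hlam0 (M + 1)
    linarith
  exact (div_le_div_iff_of_pos_right hden).mpr hnum

lemma phiInf_pos (hn : 0 < n) (hQb : Qb.PosDef) (hPb : Pb.PosDef)
    (hLyap : (A + B * K)ᵀ * Pb * (A + B * K) - Pb = -Qb) (hP : P.PosDef) (hQ : Q.PosDef) :
    lamMin P ≤ phiInf Qb Pb P Q K :=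
  le_trans (pm_le_phi A B K Qb Pb P Q hn hQb hPb hLyap hP hQ 0)
    (phi_le_phiInf A B K Qb Pb P Q hn hQb hPb hLyap hP hQ 0)

lemma fac_le_chi (hn : 0 < n) (hQb : Qb.PosDef) (hPb : Pb.PosDef)
    (hLyap : (A + B * K)ᵀ * Pb * (A + B * K) - Pb = -Qb) (hP : P.PosDef) (hQ : Q.PosDef)
    (M : ℕ) : 1 - lamMin P / phi Qb Pb P Q K M ≤ chiC Qb Pb P Q K := by
  have h1 : 0 < lamMin P := lamMin_pos hn hP
  have h2 : 0 < phi Qb Pb P Q K M := phi_pos A B K Qb Pb P Q hn hQb hPb hLyap hP hQ M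
  have h3 : phi Qb Pb P Q K M ≤ phiInf Qb Pb P Q K :=
    phi_le_phiInf A B K Qb Pb P Q hn hQb hPb hLyap hP hQ M
  have h4 := div_le_div_of_nonneg_left h1.le h2 h3
  rw [chiC]
  linarith

lemma fac_nonneg (hn : 0 < n) (hQb : Qb.PosDef) (hPb : Pb.PosDef)
    (hLyap : (A + B * K)ᵀ * Pb * (A + B * K) - Pb = -Qb) (hP : P.PosDef) (hQ : Q.PosDef)
    (M : ℕ) : 0 ≤ 1 - lamMin P / phi Qb Pb P Q K M := by
  have h2 : 0 < phi Qb Pb P Q K M := phi_pos A B K Qb Pb P Q hn hQb hPb hLyap hP hQ M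
  have h3 := pm_le_phi A B K Qb Pb P Q hn hQb hPb hLyap hP hQ M
  have : lamMin P / phi Qb Pb P Q K M ≤ 1 := (div_le_one h2).mpr h3
  linarith

lemma chi_nonneg (hn : 0 < n) (hQb : Qb.PosDef) (hPb : Pb.PosDef)
    (hLyap : (A + B * K)ᵀ * Pb * (A + B * K) - Pb = -Qb) (hP : P.PosDef) (hQ : Q.PosDef) :
    0 ≤ chiC Qb Pb P Q K :=
  le_trans (fac_nonneg A B K Qb Pb P Q hn hQb hPb hLyap hP hQ 0)
    (fac_le_chi A B K Qb Pb P Q hn hQb hPb hLyap hP hQ 0)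

lemma psi_nonneg (hn : 0 < n) (hP : P.PosDef) (hQ : Q.PosDef) :
    0 ≤ psiC P (A + B * K) Q K := by
  have hpsd : (Kᵀ * Q * K + (A + B * K)ᵀ * P * (A + B * K)).PosSemidef :=
    (psd_tmul hQ.posSemidef K).add (psd_tmul hP.posSemidef (A + B * K))
  exact div_nonneg (lamMax_nonneg_psd hn hpsd) (lamMin_pos hn hP).le

end Scalars
noncomputable def tcost {n m : ℕ} (A : Matrix (Fin n) (Fin n) ℝ) (B : Matrix (Fin n) (Fin m) ℝ)
    (P : Matrix (Fin n) (Fin n) ℝ) (Q : Matrix (Fin m) (Fin m) ℝ)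
    (N' : ℕ) (x : Fin n → ℝ) (u : ℕ → Fin m → ℝ) (i : ℕ) : ℝ :=
  cost A B P Q (N' - i) (traj A B x u i) (fun σ => u (i + σ))

section TMach
variable {n m : ℕ} (A : Matrix (Fin n) (Fin n) ℝ) (B : Matrix (Fin n) (Fin m) ℝ)
  (K : Matrix (Fin m) (Fin n) ℝ) (Qb Pb P : Matrix (Fin n) (Fin n) ℝ)
  (Q : Matrix (Fin m) (Fin m) ℝ) (c : ℝ) (X0 X : Set (Fin n → ℝ)) (U : Set (Fin m → ℝ))

lemma tcost_zero (N' : ℕ) (x : Fin n → ℝ) (u : ℕ → Fin m → ℝ) :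
    tcost A B P Q N' x u 0 = cost A B P Q N' x u := by
  have h : (fun σ => u (0 + σ)) = u := funext fun σ => by rw [Nat.zero_add]
  rw [tcost, h, Nat.sub_zero]
  rfl

lemma tcost_last (N' : ℕ) (x : Fin n → ℝ) (u : ℕ → Fin m → ℝ) :
    tcost A B P Q N' x u N' = qf P (traj A B x u N') := by
  rw [tcost, Nat.sub_self, cost]
  simp [traj]

lemma tcost_nonneg (hP : P.PosDef) (hQ : Q.PosDef) (N' : ℕ) (x : Fin n → ℝ)
    (u : ℕ → Fin m → ℝ) (i : ℕ) : 0 ≤ tcost A B P Q N' x u i :=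
  cost_nonneg A B P Q hP hQ _ _ _

lemma tcost_succ (N' i : ℕ) (hi : i < N') (x : Fin n → ℝ) (u : ℕ → Fin m → ℝ) :
    tcost A B P Q N' x u i
      = (qf P (traj A B x u i) + qf Q (u i)) + tcost A B P Q N' x u (i + 1) := by
  rw [tcost, cost_split A B P Q (N' - i) 1 (by omega) (traj A B x u i) (fun σ => u (i + σ)),
    Finset.sum_range_one]
  have h1 : traj A B (traj A B x u i) (fun σ => u (i + σ)) 1 = traj A B x u (i + 1) :=
    traj_add A B x u i 1
  have h2 : N' - i - 1 = N' - (i + 1) := by omega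
  have h3 : (fun σ => u (i + (1 + σ))) = (fun σ => u (i + 1 + σ)) :=
    funext fun σ => congrArg u (by omega)
  rw [tcost, h1, h2, h3]
  rfl

lemma t_step (hn : 0 < n) (hQb : Qb.PosDef) (hPb : Pb.PosDef)
    (hLyap : (A + B * K)ᵀ * Pb * (A + B * K) - Pb = -Qb)
    (hX0 : X0 = {x : Fin n → ℝ | qf Pb x ≤ c}) (hX0X : X0 ⊆ X)
    (hKU : ∀ x ∈ X, K *ᵥ x ∈ U) (hP : P.PosDef) (hQ : Q.PosDef)
    (N' : ℕ) (x : Fin n → ℝ) (u : ℕ → Fin m → ℝ) (hx : x ∈ X0)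
    (hu : Feasible A B X0 U N' x u) (hopt : cost A B P Q N' x u = Vopt A B P Q X0 U N' x)
    (i : ℕ) (hi : i < N') :
    tcost A B P Q N' x u (i + 1)
      ≤ (1 - lamMin P / phi Qb Pb P Q K (N' - i)) * tcost A B P Q N' x u i := by
  have hTi : traj A B x u i ∈ X0 := by
    cases i with
    | zero => exact hx
    | succ j => exact hu.2 j (by omega)
  obtain ⟨w, hwf, hwc⟩ := fallback_exists A B K Qb Pb P Q c X0 X U hn hQb hPb hLyap hX0 hX0X
    hKU hP hQ (traj A B x u i) hTi (N' - i)
  have hsp := splice_bound A B P Q X0 U hP hQ N' i hi.le x u w hu hopt hwf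
  have h1 : tcost A B P Q N' x u i
      ≤ phi Qb Pb P Q K (N' - i) * (traj A B x u i ⬝ᵥ traj A B x u i) := by
    rw [tcost]; exact le_trans hsp hwc
  have h2 : lamMin P * (traj A B x u i ⬝ᵥ traj A B x u i) ≤ qf P (traj A B x u i) :=
    lamMin_le_qf P hP.1 _
  have hpm : 0 < lamMin P := lamMin_pos hn hP
  have hphi : 0 < phi Qb Pb P Q K (N' - i) := phi_pos A B K Qb Pb P Q hn hQb hPb hLyap hP hQ _
  have h3 : lamMin P / phi Qb Pb P Q K (N' - i) * tcost A B P Q N' x u i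
      ≤ qf P (traj A B x u i) := by
    rw [div_mul_eq_mul_div, div_le_iff₀ hphi]
    nlinarith [mul_le_mul_of_nonneg_left h1 hpm.le, mul_le_mul_of_nonneg_left h2 hphi.le]
  have h4 := tcost_succ A B P Q N' i hi x u
  have h5 : 0 ≤ qf Q (u i) := psd_qf_nonneg hQ.posSemidef _
  nlinarith [h3, h4, h5]

lemma t_chain (hn : 0 < n) (hQb : Qb.PosDef) (hPb : Pb.PosDef)
    (hLyap : (A + B * K)ᵀ * Pb * (A + B * K) - Pb = -Qb)
    (hX0 : X0 = {x : Fin n → ℝ | qf Pb x ≤ c}) (hX0X : X0 ⊆ X)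
    (hKU : ∀ x ∈ X, K *ᵥ x ∈ U) (hP : P.PosDef) (hQ : Q.PosDef)
    (N' : ℕ) (x : Fin n → ℝ) (u : ℕ → Fin m → ℝ) (hx : x ∈ X0)
    (hu : Feasible A B X0 U N' x u) (hopt : cost A B P Q N' x u = Vopt A B P Q X0 U N' x) :
    ∀ d i, i + d ≤ N' → tcost A B P Q N' x u (i + d)
      ≤ chiC Qb Pb P Q K ^ d * tcost A B P Q N' x u i := by
  intro d
  induction d with
  | zero => intro i h; simp
  | succ d ih =>
      intro i h
      have hstep := t_step A B K Qb Pb P Q c X0 X U hn hQb hPb hLyap hX0 hX0X hKU hP hQ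
        N' x u hx hu hopt (i + d) (by omega)
      have hfac := fac_le_chi A B K Qb Pb P Q hn hQb hPb hLyap hP hQ (N' - (i + d))
      have ht0 : 0 ≤ tcost A B P Q N' x u (i + d) := tcost_nonneg A B P Q hP hQ N' x u _
      have h1 : tcost A B P Q N' x u (i + d + 1) ≤ chiC Qb Pb P Q K * tcost A B P Q N' x u (i + d) :=
        le_trans hstep (mul_le_mul_of_nonneg_right hfac ht0)
      have h2 := ih i (by omega)
      have hchi : 0 ≤ chiC Qb Pb P Q K := chi_nonneg A B K Qb Pb P Q hn hQb hPb hLyap hP hQ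
      calc tcost A B P Q N' x u (i + (d + 1)) = tcost A B P Q N' x u (i + d + 1) := by
            rw [show i + (d + 1) = i + d + 1 from rfl]
        _ ≤ chiC Qb Pb P Q K * tcost A B P Q N' x u (i + d) := h1
        _ ≤ chiC Qb Pb P Q K * (chiC Qb Pb P Q K ^ d * tcost A B P Q N' x u i) :=
            mul_le_mul_of_nonneg_left h2 hchi
        _ = chiC Qb Pb P Q K ^ (d + 1) * tcost A B P Q N' x u i := by ring

lemma t_term (hn : 0 < n) (hQb : Qb.PosDef) (hPb : Pb.PosDef)
    (hLyap : (A + B * K)ᵀ * Pb * (A + B * K) - Pb = -Qb)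
    (hX0 : X0 = {x : Fin n → ℝ | qf Pb x ≤ c}) (hX0X : X0 ⊆ X)
    (hKU : ∀ x ∈ X, K *ᵥ x ∈ U) (hP : P.PosDef) (hQ : Q.PosDef)
    (N' : ℕ) (x : Fin n → ℝ) (u : ℕ → Fin m → ℝ) (hx : x ∈ X0)
    (hu : Feasible A B X0 U N' x u) (hopt : cost A B P Q N' x u = Vopt A B P Q X0 U N' x) :
    ∀ d i, i + d = N' → qf P (traj A B x u N')
      ≤ (∏ κ ∈ Finset.range d, (1 - lamMin P / phi Qb Pb P Q K (κ + 1)))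
        * tcost A B P Q N' x u i := by
  intro d
  induction d with
  | zero =>
      intro i h
      have : i = N' := by omega
      subst this
      rw [← tcost_last A B P Q i x u]
      simp
  | succ d ih =>
      intro i h
      have h1 := ih (i + 1) (by omega)
      have hstep := t_step A B K Qb Pb P Q c X0 X U hn hQb hPb hLyap hX0 hX0X hKU hP hQ
        N' x u hx hu hopt i (by omega)
      have hG : 0 ≤ ∏ κ ∈ Finset.range d, (1 - lamMin P / phi Qb Pb P Q K (κ + 1)) :=
        Finset.prod_nonneg fun κ _ => fac_nonneg A B K Qb Pb P Q hn hQb hPb hLyap hP hQ _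
      have hidx : N' - i = d + 1 := by omega
      rw [hidx] at hstep
      calc qf P (traj A B x u N')
          ≤ (∏ κ ∈ Finset.range d, (1 - lamMin P / phi Qb Pb P Q K (κ + 1)))
            * tcost A B P Q N' x u (i + 1) := h1
        _ ≤ (∏ κ ∈ Finset.range d, (1 - lamMin P / phi Qb Pb P Q K (κ + 1)))
            * ((1 - lamMin P / phi Qb Pb P Q K (d + 1)) * tcost A B P Q N' x u i) :=
            mul_le_mul_of_nonneg_left hstep hG
        _ = (∏ κ ∈ Finset.range (d + 1), (1 - lamMin P / phi Qb Pb P Q K (κ + 1)))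
            * tcost A B P Q N' x u i := by
            rw [Finset.prod_range_succ]; ring

end TMach
section UMach
variable {n m : ℕ} (A : Matrix (Fin n) (Fin n) ℝ) (B : Matrix (Fin n) (Fin m) ℝ)
  (K : Matrix (Fin m) (Fin n) ℝ) (Qb Pb P : Matrix (Fin n) (Fin n) ℝ)
  (Q : Matrix (Fin m) (Fin m) ℝ) (c : ℝ) (X0 X : Set (Fin n → ℝ)) (U : Set (Fin m → ℝ))

lemma qfM_le_psi_qfP (hn : 0 < n) (hP : P.PosDef) (hQ : Q.PosDef) (T : Fin n → ℝ) :
    qf (Kᵀ * Q * K + (A + B * K)ᵀ * P * (A + B * K)) T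
      ≤ psiC P (A + B * K) Q K * qf P T := by
  have hMpsd : (Kᵀ * Q * K + (A + B * K)ᵀ * P * (A + B * K)).PosSemidef :=
    (psd_tmul hQ.posSemidef K).add (psd_tmul hP.posSemidef (A + B * K))
  have hqM := qf_le_lamMax _ hMpsd.1 T
  have h2 : lamMin P * (T ⬝ᵥ T) ≤ qf P T := lamMin_le_qf P hP.1 T
  have hpm : 0 < lamMin P := lamMin_pos hn hP
  have hMnn : 0 ≤ lamMax (Kᵀ * Q * K + (A + B * K)ᵀ * P * (A + B * K)) :=
    lamMax_nonneg_psd hn hMpsd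
  rw [psiC, div_mul_eq_mul_div, le_div_iff₀ hpm]
  nlinarith [mul_le_mul_of_nonneg_left h2 hMnn, mul_le_mul_of_nonneg_right hqM hpm.le]

lemma vopt_ext (hn : 0 < n) (hQb : Qb.PosDef) (hPb : Pb.PosDef)
    (hLyap : (A + B * K)ᵀ * Pb * (A + B * K) - Pb = -Qb)
    (hX0 : X0 = {x : Fin n → ℝ | qf Pb x ≤ c}) (hX0X : X0 ⊆ X)
    (hKU : ∀ x ∈ X, K *ᵥ x ∈ U) (hP : P.PosDef) (hQ : Q.PosDef)
    (N' : ℕ) (x : Fin n → ℝ) (hx : x ∈ X0) (w : ℕ → Fin m → ℝ)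
    (hwf : Feasible A B X0 U N' x w)
    (hwopt : cost A B P Q N' x w = Vopt A B P Q X0 U N' x) :
    Vopt A B P Q X0 U (N' + 1) x
      ≤ (1 + alphaC Qb Pb P (A + B * K) Q K N') * Vopt A B P Q X0 U N' x := by
  have hext := ext_bound A B K Qb Pb P Q c X0 X U hn hQb hPb hLyap hX0 hX0X hKU hP hQ
    N' x w hx hwf
  rw [hwopt] at hext
  have h3 := qfM_le_psi_qfP A B K P Q hn hP hQ (traj A B x w N')
  have hterm := t_term A B K Qb Pb P Q c X0 X U hn hQb hPb hLyap hX0 hX0X hKU hP hQ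
    N' x w hx hwf hwopt N' 0 (by omega)
  rw [tcost_zero A B P Q N' x w, hwopt] at hterm
  have hpsi : 0 ≤ psiC P (A + B * K) Q K := psi_nonneg A B K P Q hn hP hQ
  have h4 : psiC P (A + B * K) Q K * qf P (traj A B x w N')
      ≤ alphaC Qb Pb P (A + B * K) Q K N' * Vopt A B P Q X0 U N' x := by
    rw [alphaC, mul_assoc]
    exact mul_le_mul_of_nonneg_left hterm hpsi
  have hr : (1 + alphaC Qb Pb P (A + B * K) Q K N') * Vopt A B P Q X0 U N' x
      = Vopt A B P Q X0 U N' x + alphaC Qb Pb P (A + B * K) Q K N' * Vopt A B P Q X0 U N' x := by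
    ring
  linarith

lemma vopt_tail (hn : 0 < n) (hQb : Qb.PosDef) (hPb : Pb.PosDef)
    (hLyap : (A + B * K)ᵀ * Pb * (A + B * K) - Pb = -Qb)
    (hX0 : X0 = {x : Fin n → ℝ | qf Pb x ≤ c}) (hX0X : X0 ⊆ X)
    (hKU : ∀ x ∈ X, K *ᵥ x ∈ U) (hP : P.PosDef) (hQ : Q.PosDef)
    (N' : ℕ) (x : Fin n → ℝ) (hx : x ∈ X0) (u : ℕ → Fin m → ℝ)
    (hu : Feasible A B X0 U N' x u)
    (hopt : cost A B P Q N' x u = Vopt A B P Q X0 U N' x)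
    (i : ℕ) (hi : i + 1 ≤ N') :
    Vopt A B P Q X0 U (N' - i) (traj A B x u (i + 1))
      ≤ (1 + alphaC Qb Pb P (A + B * K) Q K (N' - (i + 1)))
        * tcost A B P Q N' x u (i + 1) := by
  have hT' : traj A B x u (i + 1) ∈ X0 := hu.2 i (by omega)
  have hshift : Feasible A B X0 U (N' - (i + 1)) (traj A B x u (i + 1))
      (fun σ => u (i + 1 + σ)) := feasible_shift A B X0 U N' (i + 1) hi x u hu
  have hext := ext_bound A B K Qb Pb P Q c X0 X U hn hQb hPb hLyap hX0 hX0X hKU hP hQ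
    (N' - (i + 1)) (traj A B x u (i + 1)) (fun σ => u (i + 1 + σ)) hT' hshift
  have hidx : N' - (i + 1) + 1 = N' - i := by omega
  rw [hidx] at hext
  have htr : traj A B (traj A B x u (i + 1)) (fun σ => u (i + 1 + σ)) (N' - (i + 1))
      = traj A B x u N' := by
    rw [traj_add A B x u (i + 1) (N' - (i + 1)), show i + 1 + (N' - (i + 1)) = N' by omega]
  rw [htr] at hext
  have h3 := qfM_le_psi_qfP A B K P Q hn hP hQ (traj A B x u N')
  have hterm := t_term A B K Qb Pb P Q c X0 X U hn hQb hPb hLyap hX0 hX0X hKU hP hQ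
    N' x u hx hu hopt (N' - (i + 1)) (i + 1) (by omega)
  have hpsi : 0 ≤ psiC P (A + B * K) Q K := psi_nonneg A B K P Q hn hP hQ
  have h4 : psiC P (A + B * K) Q K * qf P (traj A B x u N')
      ≤ alphaC Qb Pb P (A + B * K) Q K (N' - (i + 1)) * tcost A B P Q N' x u (i + 1) := by
    rw [alphaC, mul_assoc]
    exact mul_le_mul_of_nonneg_left hterm hpsi
  have hc : cost A B P Q (N' - (i + 1)) (traj A B x u (i + 1)) (fun σ => u (i + 1 + σ))
      = tcost A B P Q N' x u (i + 1) := rfl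
  rw [hc] at hext
  have hr : (1 + alphaC Qb Pb P (A + B * K) Q K (N' - (i + 1))) * tcost A B P Q N' x u (i + 1)
      = tcost A B P Q N' x u (i + 1)
        + alphaC Qb Pb P (A + B * K) Q K (N' - (i + 1)) * tcost A B P Q N' x u (i + 1) := by
    ring
  linarith

end UMach
lemma lamMin_empty (R : Matrix (Fin 0) (Fin 0) ℝ) : lamMin R = 0 := by
  rw [lamMin]
  split
  · exact Real.iInf_of_isEmpty _
  · rfl

lemma lamMax_empty (R : Matrix (Fin 0) (Fin 0) ℝ) : lamMax R = 0 := by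
  rw [lamMax]
  split
  · exact Real.iSup_of_isEmpty _
  · rfl

/-- Theorem 1, part 1: exponential stability and infinite-horizon cost:
under the AR-RHC setting with `N ≥ S + 1` and `γ_{N,S} < 1`, for all `k ≥ 0` (with
`s(−1) := 0`): `V_{N−s(k−1)}(x(k)) ≤ γ_{N,S}^k·V_N(x(0))`, and the infinite-horizon cost
satisfies `Σ_k (x(k)ᵀPx(k) + u_kᵀQu_k) ≤ V_N(x(0))/(1 − γ_{N,S})`, where
`u_k = u(k | k − s(k))` is the applied input. -/
theorem stmt14 {n m : ℕ}
    (A : Matrix (Fin n) (Fin n) ℝ) (B : Matrix (Fin n) (Fin m) ℝ)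
    (K : Matrix (Fin m) (Fin n) ℝ) (Qb Pb : Matrix (Fin n) (Fin n) ℝ)
    (hQb : Qb.PosDef) (hPb : Pb.PosDef)
    (hLyap : (A + B * K)ᵀ * Pb * (A + B * K) - Pb = -Qb)
    (c : ℝ) (hc : 0 < c)
    (X0 : Set (Fin n → ℝ)) (hX0 : X0 = {x : Fin n → ℝ | qf Pb x ≤ c})
    (X : Set (Fin n → ℝ)) (U : Set (Fin m → ℝ))
    (hX : Convex ℝ X) (hU : Convex ℝ U)
    (h0X : (0 : Fin n → ℝ) ∈ X) (h0U : (0 : Fin m → ℝ) ∈ U)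
    (hX0X : X0 ⊆ X) (hKU : ∀ x ∈ X, K *ᵥ x ∈ U)
    (P : Matrix (Fin n) (Fin n) ℝ) (Q : Matrix (Fin m) (Fin m) ℝ)
    (hP : P.PosDef) (hQ : Q.PosDef)
    (S N : ℕ) (hSN : S + 1 ≤ N)
    (ϑ : ℕ → Bool) (hϑ0 : ϑ 0 = false)
    (s : ℕ → ℕ) (hs0 : s 0 = 0)
    (hsrec : ∀ k, s (k + 1) = if ϑ (k + 1) = true then s k + 1 else 0)
    (hsS : ∀ k, s k ≤ S)
    (x : ℕ → Fin n → ℝ) (hxX0 : ∀ k, x k ∈ X0)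
    (uplan : ℕ → ℕ → Fin m → ℝ)
    (hplan : ∀ k, ϑ k = false →
      Feasible A B X0 U N (x k) (uplan k) ∧
        cost A B P Q N (x k) (uplan k) = Vopt A B P Q X0 U N (x k))
    (hdyn : ∀ k, x (k + 1) = A *ᵥ x k + B *ᵥ uplan (k - s k) (s k))
    (hattain : ∀ k, ∀ N' : ℕ, N - S ≤ N' → N' ≤ N →
      ∃ w : ℕ → Fin m → ℝ, Feasible A B X0 U N' (x k) w ∧
        cost A B P Q N' (x k) w = Vopt A B P Q X0 U N' (x k))
    (hgamma : gammaNS Qb Pb P (A + B * K) Q K N S < 1) :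
    (∀ k : ℕ, Vopt A B P Q X0 U (N - s (k - 1)) (x k)
      ≤ gammaNS Qb Pb P (A + B * K) Q K N S ^ k * Vopt A B P Q X0 U N (x 0)) ∧
    ∑' k : ℕ, (qf P (x k) + qf Q (uplan (k - s k) (s k)))
      ≤ Vopt A B P Q X0 U N (x 0) / (1 - gammaNS Qb Pb P (A + B * K) Q K N S) := by
  
  rcases Nat.eq_zero_or_pos n with hn0 | hn
  · exfalso
    subst hn0
    have h1 : gammaNS Qb Pb P (A + B * K) Q K N S = 1 := by
      norm_num [gammaNS, alphaC, psiC, phiInf, phi, lamParam, lamMin_empty, lamMax_empty]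
    rw [h1] at hgamma
    exact lt_irrefl 1 hgamma
  -- main case
  have hpm : 0 < lamMin P := lamMin_pos hn hP
  have hχ0 : 0 ≤ chiC Qb Pb P Q K := chi_nonneg A B K Qb Pb P Q hn hQb hPb hLyap hP hQ
  have hψ0 : 0 ≤ psiC P (A + B * K) Q K := psi_nonneg A B K P Q hn hP hQ
  have hα0 : ∀ M, 0 ≤ alphaC Qb Pb P (A + B * K) Q K M := fun M =>
    mul_nonneg hψ0 (Finset.prod_nonneg fun κ _ =>
      fac_nonneg A B K Qb Pb P Q hn hQb hPb hLyap hP hQ _)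
  have hfac1 : ∀ M, (1 - lamMin P / phi Qb Pb P Q K M) ≤ 1 := by
    intro M
    have h1 := phi_pos A B K Qb Pb P Q hn hQb hPb hLyap hP hQ M
    have h2 : 0 ≤ lamMin P / phi Qb Pb P Q K M := div_nonneg hpm.le h1.le
    linarith
  have hαanti : ∀ M M', M' ≤ M →
      alphaC Qb Pb P (A + B * K) Q K M ≤ alphaC Qb Pb P (A + B * K) Q K M' := by
    intro M M' hMM
    rw [alphaC, alphaC]
    refine mul_le_mul_of_nonneg_left ?_ hψ0
    rw [Finset.range_eq_Ico, Finset.range_eq_Ico,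
      ← Finset.prod_Ico_consecutive _ (Nat.zero_le M') hMM]
    refine mul_le_of_le_one_right (Finset.prod_nonneg fun κ _ =>
      fac_nonneg A B K Qb Pb P Q hn hQb hPb hLyap hP hQ _) ?_
    exact Finset.prod_le_one
      (fun κ _ => fac_nonneg A B K Qb Pb P Q hn hQb hPb hLyap hP hQ _)
      (fun κ _ => hfac1 _)
  have haa1 : (1:ℝ) ≤ 1 + alphaC Qb Pb P (A + B * K) Q K (N - S - 1) := by
    linarith [hα0 (N - S - 1)]
  have haa0 : (0:ℝ) ≤ 1 + alphaC Qb Pb P (A + B * K) Q K (N - S - 1) := by linarith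
  have hmx1 : (1:ℝ) ≤ max (1 + alphaC Qb Pb P (A + B * K) Q K (N - S - 1))
      ((1 + alphaC Qb Pb P (A + B * K) Q K (N - 1)) *
        ∏ ℓ ∈ Finset.Ico (N - S) N, (1 + alphaC Qb Pb P (A + B * K) Q K ℓ)) :=
    le_trans haa1 (le_max_left _ _)
  have hγeq : gammaNS Qb Pb P (A + B * K) Q K N S
      = chiC Qb Pb P Q K * max (1 + alphaC Qb Pb P (A + B * K) Q K (N - S - 1))
        ((1 + alphaC Qb Pb P (A + B * K) Q K (N - 1)) *
          ∏ ℓ ∈ Finset.Ico (N - S) N, (1 + alphaC Qb Pb P (A + B * K) Q K ℓ)) := rfl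
  have hγ0 : 0 ≤ gammaNS Qb Pb P (A + B * K) Q K N S := by
    rw [hγeq]; exact mul_nonneg hχ0 (by linarith)
  have hχγ : chiC Qb Pb P Q K ≤ gammaNS Qb Pb P (A + B * K) Q K N S := by
    rw [hγeq]
    nlinarith [hχ0, hmx1]
  have hV0 : ∀ N' y, 0 ≤ Vopt A B P Q X0 U N' y := fun N' y =>
    vopt_nonneg A B P Q hP hQ X0 U N' y
  -- facts about the attack counter
  have hsk_le : ∀ k, s k ≤ k := by
    intro k
    induction k with
    | zero => simp [hs0]
    | succ k ih => rw [hsrec k]; split <;> omega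
  have hθ0 : ∀ k, s k = 0 → ϑ k = false := by
    intro k hk
    cases k with
    | zero => exact hϑ0
    | succ k' =>
        cases hb : ϑ (k' + 1)
        · rfl
        · exfalso
          have h2 := hsrec k'
          rw [hb] at h2
          simp at h2
          omega
  have hrun_s : ∀ k d, d ≤ s k → s (k - d) = s k - d := by
    intro k d
    induction d with
    | zero => intro _; simp
    | succ d ih =>
        intro hd
        have h1 : s (k - d) = s k - d := ih (by omega)
        have h2 : 1 ≤ s (k - d) := by omega
        have h3 : k - d ≠ 0 := by
          intro h
          rw [h, hs0] at h2
          omega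
        obtain ⟨e, he⟩ : ∃ e, k - d = e + 1 := ⟨k - d - 1, by omega⟩
        have h4 := hsrec e
        rw [← he] at h4
        by_cases hb : ϑ (k - d) = true
        · rw [if_pos hb] at h4
          have h5 : k - (d + 1) = e := by omega
          rw [h5]
          omega
        · rw [if_neg hb] at h4
          omega
  have hrun : ∀ k d, d ≤ s k →
      x (k - s k + d) = traj A B (x (k - s k)) (uplan (k - s k)) d := by
    intro k d
    induction d with
    | zero => intro _; rw [Nat.add_zero]; rfl
    | succ d ih =>
        intro hd
        have hskk := hsk_le k
        have hxprev := ih (by omega)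
        have hsd : s (k - s k + d) = d := by
          have h1 := hrun_s k (s k - d) (by omega)
          have h2 : k - (s k - d) = k - s k + d := by omega
          rw [h2] at h1
          omega
        have hdyn2 := hdyn (k - s k + d)
        rw [hsd] at hdyn2
        have h3 : k - s k + d - d = k - s k := by omega
        rw [h3] at hdyn2
        have h4 : k - s k + (d + 1) = (k - s k + d) + 1 := by omega
        rw [h4, hdyn2, hxprev]
        rfl
  -- repeated extension at trajectory points
  have ext_many : ∀ (κ p d : ℕ), N - S ≤ p → p + d ≤ N →
      Vopt A B P Q X0 U (p + d) (x κ)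
        ≤ (∏ ℓ ∈ Finset.Ico p (p + d), (1 + alphaC Qb Pb P (A + B * K) Q K ℓ))
          * Vopt A B P Q X0 U p (x κ) := by
    intro κ p d hp
    induction d with
    | zero => intro _; simp
    | succ d ih =>
        intro h
        obtain ⟨w, hwf, hwopt⟩ := hattain κ (p + d) (by omega) (by omega)
        have hext := vopt_ext A B K Qb Pb P Q c X0 X U hn hQb hPb hLyap hX0 hX0X hKU hP hQ
          (p + d) (x κ) (hxX0 κ) w hwf hwopt
        have h2 := ih (by omega)
        calc Vopt A B P Q X0 U (p + (d + 1)) (x κ)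
            = Vopt A B P Q X0 U ((p + d) + 1) (x κ) := by
              rw [show p + (d + 1) = (p + d) + 1 from rfl]
          _ ≤ (1 + alphaC Qb Pb P (A + B * K) Q K (p + d))
              * Vopt A B P Q X0 U (p + d) (x κ) := hext
          _ ≤ (1 + alphaC Qb Pb P (A + B * K) Q K (p + d))
              * ((∏ ℓ ∈ Finset.Ico p (p + d), (1 + alphaC Qb Pb P (A + B * K) Q K ℓ))
                * Vopt A B P Q X0 U p (x κ)) :=
              mul_le_mul_of_nonneg_left h2 (by linarith [hα0 (p + d)])
          _ = (∏ ℓ ∈ Finset.Ico p (p + (d + 1)), (1 + alphaC Qb Pb P (A + B * K) Q K ℓ))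
              * Vopt A B P Q X0 U p (x κ) := by
              rw [show p + (d + 1) = (p + d) + 1 from rfl,
                Finset.prod_Ico_succ_top (by omega : p ≤ p + d)]
              ring
  -- the main invariant
  have main : ∀ k, (Vopt A B P Q X0 U (N - s (k - 1)) (x k)
      ≤ gammaNS Qb Pb P (A + B * K) Q K N S ^ k * Vopt A B P Q X0 U N (x 0))
      ∧ (ϑ k = false → Vopt A B P Q X0 U N (x k)
        ≤ gammaNS Qb Pb P (A + B * K) Q K N S ^ k * Vopt A B P Q X0 U N (x 0)) := by
    intro k
    induction k using Nat.strong_induction_on with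
    | _ k ih =>
      cases k with
      | zero =>
          constructor
          · show Vopt A B P Q X0 U (N - s (0 - 1)) (x 0) ≤ _
            norm_num [hs0]
          · intro _
            norm_num
      | succ k' =>
          have hskk := hsk_le k'
          have hiS := hsS k'
          have hsj : s (k' - s k') = 0 := by
            have := hrun_s k' (s k') le_rfl
            omega
          have hθj : ϑ (k' - s k') = false := hθ0 _ hsj
          obtain ⟨hwf, hwopt⟩ := hplan (k' - s k') hθj
          have hattack : x (k' + 1)
              = traj A B (x (k' - s k')) (uplan (k' - s k')) (s k' + 1) := by
            have h1 := hdyn k'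
            have h2 := hrun k' (s k') le_rfl
            rw [show k' - s k' + s k' = k' by omega] at h2
            rw [h1, h2]
            rfl
          have hb1 := vopt_tail A B K Qb Pb P Q c X0 X U hn hQb hPb hLyap hX0 hX0X hKU hP hQ
            N (x (k' - s k')) (hxX0 _) (uplan (k' - s k')) hwf hwopt (s k') (by omega)
          rw [← hattack] at hb1
          have hb2 := t_chain A B K Qb Pb P Q c X0 X U hn hQb hPb hLyap hX0 hX0X hKU hP hQ
            N (x (k' - s k')) (uplan (k' - s k')) (hxX0 _) hwf hwopt (s k' + 1) 0 (by omega)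
          simp only [Nat.zero_add] at hb2
          rw [tcost_zero, hwopt] at hb2
          have hb3 := (ih (k' - s k') (by omega)).2 hθj
          have htc0 : 0 ≤ tcost A B P Q N (x (k' - s k')) (uplan (k' - s k')) (s k' + 1) :=
            tcost_nonneg A B P Q hP hQ _ _ _ _
          have hαaa : 1 + alphaC Qb Pb P (A + B * K) Q K (N - (s k' + 1))
              ≤ 1 + alphaC Qb Pb P (A + B * K) Q K (N - S - 1) := by
            have := hαanti (N - (s k' + 1)) (N - S - 1) (by omega)
            linarith
          have hkey : ∀ E : ℝ,
              E ≤ (1 + alphaC Qb Pb P (A + B * K) Q K (N - S - 1)) ^ (s k' + 1) →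
              E * (chiC Qb Pb P Q K ^ (s k' + 1)
                * (gammaNS Qb Pb P (A + B * K) Q K N S ^ (k' - s k')
                  * Vopt A B P Q X0 U N (x 0)))
              ≤ gammaNS Qb Pb P (A + B * K) Q K N S ^ (k' + 1)
                * Vopt A B P Q X0 U N (x 0) := by
            intro E hE
            have h2 : 0 ≤ chiC Qb Pb P Q K ^ (s k' + 1)
                * (gammaNS Qb Pb P (A + B * K) Q K N S ^ (k' - s k')
                  * Vopt A B P Q X0 U N (x 0)) :=
              mul_nonneg (pow_nonneg hχ0 _) (mul_nonneg (pow_nonneg hγ0 _) (hV0 _ _))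
            have h3 : E ≤ (max (1 + alphaC Qb Pb P (A + B * K) Q K (N - S - 1))
                ((1 + alphaC Qb Pb P (A + B * K) Q K (N - 1)) *
                  ∏ ℓ ∈ Finset.Ico (N - S) N, (1 + alphaC Qb Pb P (A + B * K) Q K ℓ)))
                ^ (s k' + 1) :=
              hE.trans (pow_le_pow_left₀ haa0 (le_max_left _ _) _)
            calc E * (chiC Qb Pb P Q K ^ (s k' + 1)
                  * (gammaNS Qb Pb P (A + B * K) Q K N S ^ (k' - s k')
                    * Vopt A B P Q X0 U N (x 0)))
                ≤ (max (1 + alphaC Qb Pb P (A + B * K) Q K (N - S - 1))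
                    ((1 + alphaC Qb Pb P (A + B * K) Q K (N - 1)) *
                      ∏ ℓ ∈ Finset.Ico (N - S) N, (1 + alphaC Qb Pb P (A + B * K) Q K ℓ)))
                    ^ (s k' + 1)
                  * (chiC Qb Pb P Q K ^ (s k' + 1)
                    * (gammaNS Qb Pb P (A + B * K) Q K N S ^ (k' - s k')
                      * Vopt A B P Q X0 U N (x 0))) :=
                  mul_le_mul_of_nonneg_right h3 h2
              _ = (chiC Qb Pb P Q K * max (1 + alphaC Qb Pb P (A + B * K) Q K (N - S - 1))
                    ((1 + alphaC Qb Pb P (A + B * K) Q K (N - 1)) *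
                      ∏ ℓ ∈ Finset.Ico (N - S) N, (1 + alphaC Qb Pb P (A + B * K) Q K ℓ)))
                    ^ (s k' + 1)
                  * (gammaNS Qb Pb P (A + B * K) Q K N S ^ (k' - s k')
                    * Vopt A B P Q X0 U N (x 0)) := by
                  rw [mul_pow]
                  ring
              _ = gammaNS Qb Pb P (A + B * K) Q K N S ^ (k' + 1)
                  * Vopt A B P Q X0 U N (x 0) := by
                  rw [← hγeq, ← mul_assoc, ← pow_add,
                    show s k' + 1 + (k' - s k') = k' + 1 by omega]
          have hstep1 : Vopt A B P Q X0 U (N - s k') (x (k' + 1))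
              ≤ (1 + alphaC Qb Pb P (A + B * K) Q K (N - S - 1))
                * (chiC Qb Pb P Q K ^ (s k' + 1)
                  * (gammaNS Qb Pb P (A + B * K) Q K N S ^ (k' - s k')
                    * Vopt A B P Q X0 U N (x 0))) := by
            calc Vopt A B P Q X0 U (N - s k') (x (k' + 1))
                ≤ (1 + alphaC Qb Pb P (A + B * K) Q K (N - (s k' + 1)))
                  * tcost A B P Q N (x (k' - s k')) (uplan (k' - s k')) (s k' + 1) := hb1
              _ ≤ (1 + alphaC Qb Pb P (A + B * K) Q K (N - S - 1))
                  * tcost A B P Q N (x (k' - s k')) (uplan (k' - s k')) (s k' + 1) :=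
                  mul_le_mul_of_nonneg_right hαaa htc0
              _ ≤ (1 + alphaC Qb Pb P (A + B * K) Q K (N - S - 1))
                  * (chiC Qb Pb P Q K ^ (s k' + 1)
                    * Vopt A B P Q X0 U N (x (k' - s k'))) :=
                  mul_le_mul_of_nonneg_left hb2 haa0
              _ ≤ (1 + alphaC Qb Pb P (A + B * K) Q K (N - S - 1))
                  * (chiC Qb Pb P Q K ^ (s k' + 1)
                    * (gammaNS Qb Pb P (A + B * K) Q K N S ^ (k' - s k')
                      * Vopt A B P Q X0 U N (x 0))) :=
                  mul_le_mul_of_nonneg_left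
                    (mul_le_mul_of_nonneg_left hb3 (pow_nonneg hχ0 _)) haa0
          constructor
          · show Vopt A B P Q X0 U (N - s (k' + 1 - 1)) (x (k' + 1)) ≤ _
            simp only [Nat.add_sub_cancel]
            exact hstep1.trans (hkey _ (le_self_pow₀ haa1 (Nat.succ_ne_zero _)))
          · intro _
            have hPP : (∏ ℓ ∈ Finset.Ico (N - s k') N,
                (1 + alphaC Qb Pb P (A + B * K) Q K ℓ))
                ≤ (1 + alphaC Qb Pb P (A + B * K) Q K (N - S - 1)) ^ s k' := by
              calc (∏ ℓ ∈ Finset.Ico (N - s k') N,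
                  (1 + alphaC Qb Pb P (A + B * K) Q K ℓ))
                  ≤ ∏ _ℓ ∈ Finset.Ico (N - s k') N,
                    (1 + alphaC Qb Pb P (A + B * K) Q K (N - S - 1)) := by
                    refine Finset.prod_le_prod (fun ℓ _ => by linarith [hα0 ℓ]) ?_
                    intro ℓ hℓ
                    have hm := Finset.mem_Ico.mp hℓ
                    have := hαanti ℓ (N - S - 1) (by omega)
                    linarith
                _ = (1 + alphaC Qb Pb P (A + B * K) Q K (N - S - 1)) ^ s k' := by
                    rw [Finset.prod_const, Nat.card_Ico,
                      show N - (N - s k') = s k' by omega]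
            have hext := ext_many (k' + 1) (N - s k') (s k') (by omega) (by omega)
            rw [show N - s k' + s k' = N by omega] at hext
            have hcomb : Vopt A B P Q X0 U N (x (k' + 1))
                ≤ (1 + alphaC Qb Pb P (A + B * K) Q K (N - S - 1)) ^ s k'
                  * ((1 + alphaC Qb Pb P (A + B * K) Q K (N - S - 1))
                    * (chiC Qb Pb P Q K ^ (s k' + 1)
                      * (gammaNS Qb Pb P (A + B * K) Q K N S ^ (k' - s k')
                        * Vopt A B P Q X0 U N (x 0)))) :=
              hext.trans (mul_le_mul hPP hstep1 (hV0 _ _) (pow_nonneg haa0 _))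
            have heq : (1 + alphaC Qb Pb P (A + B * K) Q K (N - S - 1)) ^ s k'
                  * ((1 + alphaC Qb Pb P (A + B * K) Q K (N - S - 1))
                    * (chiC Qb Pb P Q K ^ (s k' + 1)
                      * (gammaNS Qb Pb P (A + B * K) Q K N S ^ (k' - s k')
                        * Vopt A B P Q X0 U N (x 0))))
                = (1 + alphaC Qb Pb P (A + B * K) Q K (N - S - 1)) ^ (s k' + 1)
                  * (chiC Qb Pb P Q K ^ (s k' + 1)
                    * (gammaNS Qb Pb P (A + B * K) Q K N S ^ (k' - s k')
                      * Vopt A B P Q X0 U N (x 0))) := by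
              rw [pow_succ]
              ring
            rw [heq] at hcomb
            exact hcomb.trans (hkey _ le_rfl)
  refine ⟨fun k => (main k).1, ?_⟩
  -- part 2
  have stage_le : ∀ k, qf P (x k) + qf Q (uplan (k - s k) (s k))
      ≤ gammaNS Qb Pb P (A + B * K) Q K N S ^ k * Vopt A B P Q X0 U N (x 0) := by
    intro k
    have hskk := hsk_le k
    have hiS := hsS k
    have hsj : s (k - s k) = 0 := by
      have := hrun_s k (s k) le_rfl
      omega
    have hθj : ϑ (k - s k) = false := hθ0 _ hsj
    obtain ⟨hwf, hwopt⟩ := hplan (k - s k) hθj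
    have hxk : x k = traj A B (x (k - s k)) (uplan (k - s k)) (s k) := by
      have h := hrun k (s k) le_rfl
      rwa [show k - s k + s k = k by omega] at h
    have htc := tcost_succ A B P Q N (s k) (by omega) (x (k - s k)) (uplan (k - s k))
    have htc1 : 0 ≤ tcost A B P Q N (x (k - s k)) (uplan (k - s k)) (s k + 1) :=
      tcost_nonneg A B P Q hP hQ _ _ _ _
    have h1 : qf P (x k) + qf Q (uplan (k - s k) (s k))
        ≤ tcost A B P Q N (x (k - s k)) (uplan (k - s k)) (s k) := by
      rw [hxk]
      linarith
    have h2 := t_chain A B K Qb Pb P Q c X0 X U hn hQb hPb hLyap hX0 hX0X hKU hP hQ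
      N (x (k - s k)) (uplan (k - s k)) (hxX0 _) hwf hwopt (s k) 0 (by omega)
    simp only [Nat.zero_add] at h2
    rw [tcost_zero, hwopt] at h2
    have h3 := (main (k - s k)).2 hθj
    calc qf P (x k) + qf Q (uplan (k - s k) (s k))
        ≤ tcost A B P Q N (x (k - s k)) (uplan (k - s k)) (s k) := h1
      _ ≤ chiC Qb Pb P Q K ^ s k * Vopt A B P Q X0 U N (x (k - s k)) := h2
      _ ≤ chiC Qb Pb P Q K ^ s k * (gammaNS Qb Pb P (A + B * K) Q K N S ^ (k - s k)
          * Vopt A B P Q X0 U N (x 0)) :=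
          mul_le_mul_of_nonneg_left h3 (pow_nonneg hχ0 _)
      _ ≤ gammaNS Qb Pb P (A + B * K) Q K N S ^ s k
          * (gammaNS Qb Pb P (A + B * K) Q K N S ^ (k - s k)
            * Vopt A B P Q X0 U N (x 0)) :=
          mul_le_mul_of_nonneg_right (pow_le_pow_left₀ hχ0 hχγ _)
            (mul_nonneg (pow_nonneg hγ0 _) (hV0 _ _))
      _ = gammaNS Qb Pb P (A + B * K) Q K N S ^ k * Vopt A B P Q X0 U N (x 0) := by
          rw [← mul_assoc, ← pow_add, show s k + (k - s k) = k by omega]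
  have stage_nonneg : ∀ k, 0 ≤ qf P (x k) + qf Q (uplan (k - s k) (s k)) := fun k =>
    add_nonneg (psd_qf_nonneg hP.posSemidef _) (psd_qf_nonneg hQ.posSemidef _)
  have hsummg : Summable (fun k : ℕ =>
      gammaNS Qb Pb P (A + B * K) Q K N S ^ k * Vopt A B P Q X0 U N (x 0)) :=
    (summable_geometric_of_lt_one hγ0 hgamma).mul_right _
  have hsumf : Summable (fun k : ℕ => qf P (x k) + qf Q (uplan (k - s k) (s k))) :=
    Summable.of_nonneg_of_le stage_nonneg stage_le hsummg
  calc ∑' k : ℕ, (qf P (x k) + qf Q (uplan (k - s k) (s k)))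
      ≤ ∑' k : ℕ, gammaNS Qb Pb P (A + B * K) Q K N S ^ k * Vopt A B P Q X0 U N (x 0) :=
        Summable.tsum_le_tsum stage_le hsumf hsummg
    _ = (1 - gammaNS Qb Pb P (A + B * K) Q K N S)⁻¹ * Vopt A B P Q X0 U N (x 0) := by
        rw [tsum_mul_right, tsum_geometric_of_lt_one hγ0 hgamma]
    _ = Vopt A B P Q X0 U N (x 0) / (1 - gammaNS Qb Pb P (A + B * K) Q K N S) := by
        rw [div_eq_mul_inv, mul_comm]
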